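/- Suppose every Q-market (Q ∈ Q) is complete so that the superreplication duality sup_{Q∈Q} E_Q[S_T] = inf{x ∈ ℝ : ∃ admissible H with x + (H·S)_T ≥ S_T Q-a.s. for all Q ∈ Q} holds. If the market satisfies robust no dominance, then there is no robust bubble at time 0, i.e., S_0 = sup_{Q∈Q} E_Q[S_T]. -/

import Mathlib

open MeasureTheory Filter Set

noncomputable section

/-- Lemma 3.17: if every `Q`-market is complete so that the superreplication duality holds,
and the market satisfies robust no dominance, then there is no robust bubble at time `0`:
`S_0 = sup_{Q∈𝒬} E_Q[S_T]`. -/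
theorem stmt16 {Ω : Type*} {m0 : MeasurableSpace Ω} {ι : Type*}
    (𝒬 : Set (Measure Ω)) (h𝒬 : 𝒬.Nonempty)
    (hprob : ∀ Q ∈ 𝒬, IsProbabilityMeasure Q)
    (Gain : ι → ℝ → Ω → ℝ) (S : ℝ → Ω → ℝ) (T : ℝ)
    (s0 : ℝ) (hS0 : ∀ ω, S 0 ω = s0)
    (hSint : ∀ Q ∈ 𝒬, Integrable (S T) Q)
    -- `S` is a `Q`-local martingale, hence a supermartingale, for each `Q ∈ 𝒬`:
    (hsuper : ∀ Q ∈ 𝒬, ∫ ω, S T ω ∂Q ≤ s0)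
    -- admissibility: gains from trading are `Q`-supermartingales started at `0`:
    (hGain : ∀ H : ι, ∀ Q ∈ 𝒬, Integrable (Gain H T) Q ∧ ∫ ω, Gain H T ω ∂Q ≤ 0)
    (A : Set ℝ)
    (hA : A = {x : ℝ | ∃ H : ι, ∀ Q ∈ 𝒬, ∀ᵐ ω ∂Q, S T ω ≤ x + Gain H T ω})
    (hAne : A.Nonempty)
    -- superreplication duality (completeness of each `Q`-market):
    (hdual : (⨆ Q : 𝒬, ∫ ω, S T ω ∂(Q : Measure Ω)) = sInf A)
    -- robust no dominance:
    (hRND : ¬ ∃ H : ι,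
      (∀ Q ∈ 𝒬, ∀ᵐ ω ∂Q, S T ω ≤ S 0 ω + Gain H T ω) ∧
      ∃ Q ∈ 𝒬, 0 < Q {ω | S T ω < S 0 ω + Gain H T ω}) :
    s0 = ⨆ Q : 𝒬, ∫ ω, S T ω ∂(Q : Measure Ω) := by
  have hsup_le : (⨆ Q : 𝒬, ∫ ω, S T ω ∂(Q : Measure Ω)) ≤ s0 := by
    have : Nonempty 𝒬 := h𝒬.to_subtype
    exact ciSup_le fun Q => hsuper Q Q.2
  have hle : s0 ≤ sInf A := by
    apply le_csInf hAne
    intro x hx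
    by_contra hlt
    push_neg at hlt
    rw [hA] at hx
    obtain ⟨H, hH⟩ := hx
    apply hRND
    refine ⟨H, ?_, ?_⟩
    · intro Q hQ
      filter_upwards [hH Q hQ] with ω hω
      rw [hS0]
      linarith
    · obtain ⟨Q, hQ⟩ := h𝒬
      refine ⟨Q, hQ, ?_⟩
      haveI := hprob Q hQ
      by_contra hzero
      push_neg at hzero
      have hz : Q {ω | S T ω < S 0 ω + Gain H T ω} = 0 := le_antisymm hzero zero_le
      have hcz : Q {ω | S T ω < S 0 ω + Gain H T ω}ᶜ = 0 := by
        have := hH Q hQ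
        rw [ae_iff] at this
        refine measure_mono_null ?_ this
        intro ω hω
        simp only [mem_compl_iff, mem_setOf_eq, not_lt] at hω
        simp only [mem_setOf_eq, not_le]
        have h0 := hS0 ω
        linarith
      have : (1 : ENNReal) ≤ 0 := by
        calc (1 : ENNReal) = Q univ := (measure_univ).symm
        _ ≤ Q {ω | S T ω < S 0 ω + Gain H T ω} + Q {ω | S T ω < S 0 ω + Gain H T ω}ᶜ := by
            refine (measure_mono ?_).trans (measure_union_le _ _)
            intro ω _; exact (mem_union _ _ _).2 (em _)
        _ = 0 := by rw [hz, hcz, add_zero]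
      simp at this
  linarith [hdual.le, hdual.ge]


end
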